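/- Let x, y, x₁, y₁ be reals with y > 0, y₁ > 0, let X = (1/√y)·[[1, −x],[0, y]] and X₁ = (1/√y₁)·[[1, −x₁],[0, y₁]] be 2×2 matrices. Then the squared Frobenius norm ‖I − X₁X^{−1}‖² equals ((x−x₁)/√(y y₁))² + (1 − √(y₁/y))² + (1 − √(y/y₁))², and this is at most ((x−x₁)²)/(y y₁) + (√(y/y₁) − √(y₁/y))² = 4·sinh(d_H(x+iy, x₁+iy₁)/2)², where d_H is the hyperbolic distance in the upper half plane given by 4 sinh(d_H/2)² = (x−x₁)²/(y y₁) + (√(y/y₁) − √(y₁/y))². -/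

import Mathlib

open Matrix

theorem frobenius_hyperbolic_bound (x y x₁ y₁ : ℝ) (hy : 0 < y) (hy₁ : 0 < y₁) :
    (∑ i, ∑ j,
        ((1 - ((1 / Real.sqrt y₁) • !![1, -x₁; 0, y₁]) *
            ((1 / Real.sqrt y) • !![1, -x; 0, y])⁻¹) i j) ^ 2) =
      ((x - x₁) / Real.sqrt (y * y₁)) ^ 2 + (1 - Real.sqrt (y₁ / y)) ^ 2 +
        (1 - Real.sqrt (y / y₁)) ^ 2 ∧
    ((x - x₁) / Real.sqrt (y * y₁)) ^ 2 + (1 - Real.sqrt (y₁ / y)) ^ 2 +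
        (1 - Real.sqrt (y / y₁)) ^ 2 ≤
      (x - x₁) ^ 2 / (y * y₁) + (Real.sqrt (y / y₁) - Real.sqrt (y₁ / y)) ^ 2 := by
  have hsy : Real.sqrt y ≠ 0 := ne_of_gt (Real.sqrt_pos.mpr hy)
  have hsy₁ : Real.sqrt y₁ ≠ 0 := ne_of_gt (Real.sqrt_pos.mpr hy₁)
  have hyy : Real.sqrt y * Real.sqrt y = y := Real.mul_self_sqrt hy.le
  have hyy₁ : Real.sqrt y₁ * Real.sqrt y₁ = y₁ := Real.mul_self_sqrt hy₁.le
  have hX : ((1 / Real.sqrt y) • !![1, -x; 0, y])⁻¹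
      = (1 / Real.sqrt y) • !![y, x; 0, 1] := by
    apply Matrix.inv_eq_right_inv
    ext i j
    fin_cases i <;> fin_cases j <;>
      simp [Matrix.mul_apply, Fin.sum_univ_two] <;>
      field_simp <;> simp [Real.sq_sqrt hy.le]
  have hsqrtmul : Real.sqrt (y * y₁) = Real.sqrt y * Real.sqrt y₁ :=
    Real.sqrt_mul hy.le _
  have hsqdiv : Real.sqrt (y / y₁) = Real.sqrt y / Real.sqrt y₁ :=
    Real.sqrt_div hy.le _
  have hsqdiv' : Real.sqrt (y₁ / y) = Real.sqrt y₁ / Real.sqrt y :=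
    Real.sqrt_div hy₁.le _
  constructor
  · rw [hX]
    simp [Matrix.mul_apply, Fin.sum_univ_two, Matrix.one_apply, hsqrtmul, hsqdiv, hsqdiv']
    field_simp
    have h1 : (Real.sqrt y * Real.sqrt y₁) ^ 2 = y * y₁ := by
      rw [mul_pow, sq, sq, hyy, hyy₁]
    have h2 : (Real.sqrt y₁ * Real.sqrt y) ^ 2 = y * y₁ := by
      rw [mul_pow, sq, sq, hyy, hyy₁]; ring
    linear_combination (2 * Real.sqrt y₁ * Real.sqrt y - y - Real.sqrt y ^ 2) * hyy +
      (2 * Real.sqrt y₁ * Real.sqrt y - y₁ - Real.sqrt y₁ ^ 2) * hyy₁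
  · have key : (1 - Real.sqrt (y₁ / y)) ^ 2 + (1 - Real.sqrt (y / y₁)) ^ 2 ≤
        (Real.sqrt (y / y₁) - Real.sqrt (y₁ / y)) ^ 2 := by
      have hab : Real.sqrt (y / y₁) * Real.sqrt (y₁ / y) = 1 := by
        rw [hsqdiv, hsqdiv']; field_simp
      nlinarith [sq_nonneg (Real.sqrt (y / y₁) - Real.sqrt (y₁ / y)),
        sq_nonneg (Real.sqrt (y / y₁) + Real.sqrt (y₁ / y) - 2),
        Real.sqrt_nonneg (y / y₁), Real.sqrt_nonneg (y₁ / y)]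
    have hx : ((x - x₁) / Real.sqrt (y * y₁)) ^ 2 = (x - x₁) ^ 2 / (y * y₁) := by
      rw [div_pow, Real.sq_sqrt (by positivity)]
    linarith
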